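/- Let G = ⟨A * B; [H,K]=1⟩ with U = HK, and let Θ_π(U) = {(X∩H)(Y∩K) : X ∈ Ω_π(A), Y ∈ Ω_π(B)}. If L ∈ Ω_π(G) then (L∩H)(L∩K) ∈ Θ_π(U); consequently, any cyclic subgroup of U that is π'-isolated in U but not separable by Θ_π(U) fails to be 𝓕_π-separable in G. -/

import Mathlib

open Pointwise

def IsPiNumber (π : Set ℕ) (n : ℕ) : Prop := n ≠ 0 ∧ ∀ p : ℕ, p.Prime → p ∣ n → p ∈ π

def IsPiPrimeNumber (π : Set ℕ) (n : ℕ) : Prop := n ≠ 0 ∧ ∀ p : ℕ, p.Prime → p ∣ n → p ∉ π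

/-- `N` is a normal subgroup of finite π-index, i.e. `N ∈ Ω_π(X)`. -/
def InOmega (π : Set ℕ) {X : Type*} [Group X] (N : Subgroup X) : Prop :=
  N.Normal ∧ IsPiNumber π N.index

/-- `Y` is separable by the family `F` of subgroups. -/
def SepBy {X : Type*} [Group X] (F : Set (Subgroup X)) (Y : Subgroup X) : Prop :=
  (⋂ N ∈ F, (Y : Set X) * (N : Set X)) = (Y : Set X)

/-- `Y` is 𝓕_π-separable in `X`. -/
def SepIn (π : Set ℕ) {X : Type*} [Group X] (Y : Subgroup X) : Prop :=
  SepBy {N : Subgroup X | InOmega π N} Y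

/-- `Y` is π'-isolated in `X`. -/
def Isolated (π : Set ℕ) {X : Type*} [Group X] (Y : Subgroup X) : Prop :=
  ∀ x : X, ∀ q : ℕ, IsPiPrimeNumber π q → x ^ q ∈ Y → x ∈ Y

/-- `X` is residually a finite π-group. -/
def ResiduallyPi (π : Set ℕ) (X : Type*) [Group X] : Prop :=
  ∀ x : X, x ≠ 1 → ∃ N : Subgroup X, InOmega π N ∧ x ∉ N

open Monoid

open scoped commutatorElement

variable {A B : Type*} [Group A] [Group B]

/-- The free product of `A` and `B` with commuting subgroups `H ≤ A`, `K ≤ B`: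
the quotient of the free product `A * B` by the normal closure of the mutual
commutators `[h, k]`, `h ∈ H`, `k ∈ K`. -/
abbrev FPComm (H : Subgroup A) (K : Subgroup B) : Type _ :=
  Coprod A B ⧸ Subgroup.normalClosure
    {x : Coprod A B | ∃ h ∈ H, ∃ k ∈ K, x = ⁅(Coprod.inl h : Coprod A B), Coprod.inr k⁆}

/-- The canonical map `A → G`. -/
noncomputable def iaFP (H : Subgroup A) (K : Subgroup B) : A →* FPComm H K :=
  (QuotientGroup.mk' _).comp Coprod.inl

/-- The canonical map `B → G`. -/
noncomputable def ibFP (H : Subgroup A) (K : Subgroup B) : B →* FPComm H K :=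
  (QuotientGroup.mk' _).comp Coprod.inr

/-- The subgroup `U = HK` of `G`. -/
noncomputable def Usub (H : Subgroup A) (K : Subgroup B) : Subgroup (FPComm H K) :=
  H.map (iaFP H K) ⊔ K.map (ibFP H K)

/-- The subgroup `M = ⟨A, U⟩` of `G`. -/
noncomputable def Msub (H : Subgroup A) (K : Subgroup B) : Subgroup (FPComm H K) :=
  (iaFP H K).range ⊔ Usub H K

/-- The subgroup `N = ⟨B, U⟩` of `G`. -/
noncomputable def Nsub (H : Subgroup A) (K : Subgroup B) : Subgroup (FPComm H K) :=
  (ibFP H K).range ⊔ Usub H K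

/-- In `G = ⟨A * B; [H,K] = 1⟩` with `U = HK`: for `L ∈ Ω_π(G)` the subgroup
`(L ∩ H)(L ∩ K)` belongs to `Θ_π(U)`; consequently a cyclic subgroup of `U` that is
π'-isolated in `U` but not separable by `Θ_π(U)` is not 𝓕_π-separable in `G`. -/

lemma inf_map_eq {G₁ G₂ : Type*} [Group G₁] [Group G₂] (f : G₁ →* G₂)
    (L : Subgroup G₂) (H : Subgroup G₁) :
    L ⊓ H.map f = ((L.comap f) ⊓ H).map f := by
  ext z
  constructor
  · rintro ⟨hzL, h, hH, rfl⟩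
    exact ⟨h, ⟨hzL, hH⟩, rfl⟩
  · rintro ⟨h, ⟨hL, hH⟩, rfl⟩
    exact ⟨hL, h, hH, rfl⟩

lemma inOmega_comap {π : Set ℕ} {G₁ G₂ : Type*} [Group G₁] [Group G₂] (f : G₁ →* G₂)
    {L : Subgroup G₂} (hL : InOmega π L) : InOmega π (L.comap f) := by
  obtain ⟨hn, hne, hπ⟩ := hL
  have hrel : L.relIndex f.range ∣ L.index := Subgroup.relIndex_dvd_index_of_normal L f.range
  have hidx : (L.comap f).index = L.relIndex f.range := Subgroup.index_comap L f
  refine ⟨Subgroup.Normal.comap hn f, ?_, ?_⟩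
  · rw [hidx]
    intro h0
    exact hne (by
      have := Subgroup.relIndex_eq_zero_of_le_right (le_top : f.range ≤ ⊤) h0
      rwa [Subgroup.relIndex_top_right] at this)
  · intro p hp hpd
    exact hπ p hp (dvd_trans (hidx ▸ hpd) hrel)

theorem theta_and_not_sep (π : Set ℕ) (H : Subgroup A) (K : Subgroup B) :
    (∀ L : Subgroup (FPComm H K), InOmega π L →
      ((L ⊓ H.map (iaFP H K)) ⊔ (L ⊓ K.map (ibFP H K))) ∈
        {Q : Subgroup (FPComm H K) | ∃ (X : Subgroup A) (Y : Subgroup B),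
          InOmega π X ∧ InOmega π Y ∧
          Q = ((X ⊓ H).map (iaFP H K)) ⊔ ((Y ⊓ K).map (ibFP H K))}) ∧
    (∀ C : Subgroup (FPComm H K), C ≤ Usub H K →
      (∃ c, C = Subgroup.zpowers c) →
      (∀ g ∈ Usub H K, ∀ q : ℕ, IsPiPrimeNumber π q → g ^ q ∈ C → g ∈ C) →
      ¬ SepBy {Q : Subgroup (FPComm H K) | ∃ (X : Subgroup A) (Y : Subgroup B),
          InOmega π X ∧ InOmega π Y ∧
          Q = ((X ⊓ H).map (iaFP H K)) ⊔ ((Y ⊓ K).map (ibFP H K))} C →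
      ¬ SepIn π C) := by
  have key : ∀ L : Subgroup (FPComm H K), InOmega π L →
      ((L ⊓ H.map (iaFP H K)) ⊔ (L ⊓ K.map (ibFP H K))) ∈
        {Q : Subgroup (FPComm H K) | ∃ (X : Subgroup A) (Y : Subgroup B),
          InOmega π X ∧ InOmega π Y ∧
          Q = ((X ⊓ H).map (iaFP H K)) ⊔ ((Y ⊓ K).map (ibFP H K))} := by
    intro L hL
    refine ⟨L.comap (iaFP H K), L.comap (ibFP H K), inOmega_comap _ hL, inOmega_comap _ hL, ?_⟩
    rw [← inf_map_eq, ← inf_map_eq]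
  refine ⟨key, ?_⟩
  intro C _ _ _ hnsep hsep
  apply hnsep
  unfold SepIn at hsep
  unfold SepBy at hsep ⊢
  apply Set.Subset.antisymm _ (by
    intro x hx
    simp only [Set.mem_iInter]
    intro Q _
    exact ⟨x, hx, 1, Q.one_mem, mul_one x⟩)
  intro x hx
  rw [← hsep]
  simp only [Set.mem_iInter] at hx ⊢
  intro L hL
  have hQ := key L hL
  have hxQ := hx _ hQ
  obtain ⟨c, hc, q, hq, rfl⟩ := hxQ
  have hqL : q ∈ L := by
    have hle : ((L ⊓ H.map (iaFP H K)) ⊔ (L ⊓ K.map (ibFP H K))) ≤ L :=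
      sup_le inf_le_left inf_le_left
    exact hle hq
  exact ⟨c, hc, q, hqL, rfl⟩
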